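/- Let L̃ : ℝ^p → ℝ be convex and differentiable, λ > 0, and let β̂ be a minimizer of β ↦ L̃(β) + λ‖β‖₁ over ℝ^p. Let β* ∈ ℝ^p have support S = {j : β*_j ≠ 0}, and set g = β̂ − β*. Then 0 ≤ ⟨∇L̃(β̂) − ∇L̃(β*), g⟩ ≤ λ·( ‖g_S‖₁ − ‖g_{S^c}‖₁ ) − ⟨∇L̃(β*), g⟩, where g_S and g_{S^c} denote the restrictions of g to the coordinates in S and in its complement S^c, respectively. -/

import Mathlib

open Finset

noncomputable section

private lemma line_hasDerivAt {p : ℕ} {L : (Fin p → ℝ) → ℝ} (hdiff : Differentiable ℝ L)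
    (x y : Fin p → ℝ) :
    HasDerivAt (fun t : ℝ => L (t • (y - x) + x)) (fderiv ℝ L x (y - x)) 0 := by
  have hline : HasDerivAt (fun t : ℝ => t • (y - x) + x) (y - x) 0 := by
    simpa using ((hasDerivAt_id (0:ℝ)).smul_const (y - x)).add_const x
  have hL : HasFDerivAt L (fderiv ℝ L x) ((fun t : ℝ => t • (y - x) + x) 0) := by
    simpa using (hdiff x).hasFDerivAt
  simpa [Function.comp_def] using hL.comp_hasDerivAt 0 hline

private lemma line_convexOn {p : ℕ} {L : (Fin p → ℝ) → ℝ} (hconv : ConvexOn ℝ Set.univ L)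
    (x y : Fin p → ℝ) :
    ConvexOn ℝ Set.univ (fun t : ℝ => L (t • (y - x) + x)) := by
  have := hconv.comp_affineMap (AffineMap.lineMap x y (k := ℝ))
  simpa [Function.comp_def, AffineMap.lineMap_apply] using this

private lemma subgrad {p : ℕ} {L : (Fin p → ℝ) → ℝ} (hconv : ConvexOn ℝ Set.univ L)
    (hdiff : Differentiable ℝ L) (x y : Fin p → ℝ) :
    L x + fderiv ℝ L x (y - x) ≤ L y := by
  have hφ := line_convexOn hconv x y
  have hd := line_hasDerivAt hdiff x y
  have h := hφ.le_slope_of_hasDerivAt (Set.mem_univ (0:ℝ)) (Set.mem_univ (1:ℝ)) one_pos hd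
  rw [slope_def_field] at h
  rw [map_sub]
  simp at h
  linarith

/-- **First-order optimality for ℓ₁-penalized convex minimization** (as used in the proof
of Theorem 5 of "Distributed Adaptive Huber Regression"): if `β̂` minimizes
`L̃ + λ‖·‖₁` with `L̃` convex and differentiable, then with `g = β̂ − β*` and
`S = supp(β*)`,
`0 ≤ ⟨∇L̃(β̂) − ∇L̃(β*), g⟩ ≤ λ(‖g_S‖₁ − ‖g_{Sᶜ}‖₁) − ⟨∇L̃(β*), g⟩`. -/
theorem l1_penalized_first_order_bound {p : ℕ} (L : (Fin p → ℝ) → ℝ)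
    (lam : ℝ) (hlam : 0 < lam)
    (hconv : ConvexOn ℝ Set.univ L) (hdiff : Differentiable ℝ L)
    (bhat bstar : Fin p → ℝ)
    -- β̂ minimizes β ↦ L̃(β) + λ‖β‖₁ over ℝ^p
    (hmin : ∀ β, L bhat + lam * ∑ j, |bhat j| ≤ L β + lam * ∑ j, |β j|) :
    0 ≤ fderiv ℝ L bhat (bhat - bstar) - fderiv ℝ L bstar (bhat - bstar)
    ∧ fderiv ℝ L bhat (bhat - bstar) - fderiv ℝ L bstar (bhat - bstar)
      ≤ lam * ((∑ j ∈ Finset.univ.filter (fun j => bstar j ≠ 0), |bhat j - bstar j|)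
            - ∑ j ∈ Finset.univ.filter (fun j => bstar j = 0), |bhat j - bstar j|)
        - fderiv ℝ L bstar (bhat - bstar) := by
  have hneg : (fderiv ℝ L bhat) (bstar - bhat) = -((fderiv ℝ L bhat) (bhat - bstar)) := by
    rw [← map_neg, neg_sub]
  constructor
  · -- Bregman nonnegativity
    have h1 := subgrad hconv hdiff bstar bhat
    have h2 := subgrad hconv hdiff bhat bstar
    rw [hneg] at h2
    linarith
  · -- first-order optimality
    set φ := fun t : ℝ => L (t • (bstar - bhat) + bhat) with hφdef
    have hd := line_hasDerivAt hdiff bhat bstar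
    set c := fderiv ℝ L bhat (bstar - bhat) with hc
    -- slope lower bound on (0,1]
    have key : ∀ t ∈ Set.Ioc (0:ℝ) 1,
        lam * ((∑ j, |bhat j|) - ∑ j, |bstar j|) ≤ slope φ 0 t := by
      intro t ht
      obtain ⟨ht0, ht1⟩ := ht
      have hnorm : (∑ j, |t • (bstar - bhat) j + bhat j|)
          ≤ (1 - t) * (∑ j, |bhat j|) + t * (∑ j, |bstar j|) := by
        rw [Finset.mul_sum, Finset.mul_sum, ← Finset.sum_add_distrib]
        apply Finset.sum_le_sum
        intro j _
        have : t • (bstar - bhat) j + bhat j = (1 - t) * bhat j + t * bstar j := by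
          simp [Pi.sub_apply]; ring
        rw [this]
        calc |(1 - t) * bhat j + t * bstar j| ≤ |(1-t) * bhat j| + |t * bstar j| := abs_add_le _ _
          _ = (1-t) * |bhat j| + t * |bstar j| := by
              rw [abs_mul, abs_mul, abs_of_nonneg (by linarith), abs_of_nonneg ht0.le]
      have hm := hmin (t • (bstar - bhat) + bhat)
      have hφt : L bhat - φ t ≤ lam * t * ((∑ j, |bstar j|) - ∑ j, |bhat j|) := by
        have : L bhat + lam * ∑ j, |bhat j| ≤ φ t +
            lam * ((1 - t) * (∑ j, |bhat j|) + t * (∑ j, |bstar j|)) := by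
          refine hm.trans ?_
          have : (∑ j, |(t • (bstar - bhat) + bhat) j|) = ∑ j, |t • (bstar - bhat) j + bhat j| := rfl
          rw [this]
          nlinarith [hnorm]
        nlinarith
      rw [slope_def_field]
      rw [sub_zero, le_div_iff₀ ht0]
      have hφ0 : φ 0 = L bhat := by simp [hφdef]
      nlinarith [hφt]
    have htend : Filter.Tendsto (slope φ 0) (nhdsWithin 0 (Set.Ioi 0)) (nhds c) := by
      have := hasDerivAt_iff_tendsto_slope.mp hd
      exact this.mono_left (nhdsWithin_mono _ (fun x hx => ne_of_gt hx))
    have hcge : lam * ((∑ j, |bhat j|) - ∑ j, |bstar j|) ≤ c := by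
      refine ge_of_tendsto htend ?_
      filter_upwards [Ioc_mem_nhdsGT_of_mem ⟨le_rfl, zero_lt_one⟩] with t ht
      exact key t ht
    -- c = -⟨∇L(b̂), g⟩, so ⟨∇L(b̂), g⟩ ≤ λ(‖b*‖₁ − ‖b̂‖₁)
    rw [hneg] at hcge
    -- ‖b*‖₁ − ‖b̂‖₁ ≤ ‖g_S‖₁ − ‖g_{Sᶜ}‖₁
    have hsplit : (∑ j, |bstar j|) - (∑ j, |bhat j|)
        ≤ (∑ j ∈ Finset.univ.filter (fun j => bstar j ≠ 0), |bhat j - bstar j|)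
          - ∑ j ∈ Finset.univ.filter (fun j => bstar j = 0), |bhat j - bstar j| := by
      have e1 : (∑ j, |bstar j|) - (∑ j, |bhat j|) = ∑ j, (|bstar j| - |bhat j|) := by
        rw [Finset.sum_sub_distrib]
      rw [e1, ← Finset.sum_filter_add_sum_filter_not Finset.univ (fun j => bstar j ≠ 0)
        (fun j => |bstar j| - |bhat j|)]
      have h2 : ∀ j ∈ Finset.univ.filter (fun j => ¬ bstar j ≠ 0),
          |bstar j| - |bhat j| = -|bhat j - bstar j| := by
        intro j hj
        simp only [Finset.mem_filter, not_not] at hj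
        rw [hj.2]; simp
      rw [Finset.sum_congr rfl h2]
      have hfe : Finset.univ.filter (fun j => ¬ bstar j ≠ 0)
          = Finset.univ.filter (fun j : Fin p => bstar j = 0) := by
        apply Finset.filter_congr; intro j _; simp
      rw [hfe, Finset.sum_neg_distrib]
      have h1 : (∑ j ∈ Finset.univ.filter (fun j => bstar j ≠ 0), (|bstar j| - |bhat j|))
          ≤ ∑ j ∈ Finset.univ.filter (fun j => bstar j ≠ 0), |bhat j - bstar j| := by
        apply Finset.sum_le_sum
        intro j _
        have := abs_sub_abs_le_abs_sub (bstar j) (bhat j)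
        rw [abs_sub_comm] at this
        linarith
      linarith
    nlinarith [hsplit, hcge]
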